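/- Let $a \geq 1$ and $n \geq 1$ be arbitrary integers and set $k = 2^a$. Let $A = (\mathbb{Z}_k)^n$. Then $s(A) = (k-1)2^n + 1$. -/

import Mathlib

/-- The Erdős–Ginzburg–Ziv constant `s(A)`: the smallest `ℓ ∈ ℕ` such that every
multiset `S` over `A` of length `≥ ℓ` has a zero-sum sub-multiset of length `exp(A)`. -/
noncomputable def EGZ (A : Type) [AddCommGroup A] : ℕ :=
  sInf {ℓ : ℕ | ∀ S : Multiset A, ℓ ≤ Multiset.card S →
    ∃ T ≤ S, Multiset.card T = AddMonoid.exponent A ∧ T.sum = 0}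

/-- Pigeonhole: a multiset longer than the type has a repeated element. -/
lemma egz_pigeon {γ : Type} [Fintype γ] [DecidableEq γ] (s : Multiset γ)
    (h : Fintype.card γ < Multiset.card s) : ∃ c, Multiset.replicate 2 c ≤ s := by
  by_contra hc
  push_neg at hc
  have hcount : ∀ c, s.count c ≤ 1 := by
    intro c
    by_contra hcc
    exact hc c ((Multiset.le_count_iff_replicate_le).mp (by omega))
  have : Multiset.card s ≤ Fintype.card γ := by
    rw [← Multiset.toFinset_sum_count_eq]
    calc ∑ a ∈ s.toFinset, s.count a ≤ ∑ _a ∈ s.toFinset, 1 :=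
          Finset.sum_le_sum fun a _ => hcount a
      _ = s.toFinset.card := by simp
      _ ≤ Fintype.card γ := Finset.card_le_univ _
  omega

/-- A sub-multiset of a mapped multiset comes from a sub-multiset. -/
lemma egz_exists_preimage {β γ : Type} [DecidableEq β] [DecidableEq γ] (f : β → γ) :
    ∀ (T : Multiset γ) (S : Multiset β), T ≤ S.map f → ∃ U ≤ S, U.map f = T := by
  intro T
  induction T using Multiset.induction with
  | empty => exact fun S _ => ⟨0, Multiset.zero_le S, rfl⟩
  | cons b T ih =>
    intro S h
    have hb : b ∈ S.map f := Multiset.mem_of_le h (Multiset.mem_cons_self b T)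
    obtain ⟨x, hxS, hfx⟩ := Multiset.mem_map.mp hb
    have hS : S = x ::ₘ S.erase x := (Multiset.cons_erase hxS).symm
    have hT : T ≤ (S.erase x).map f := by
      have h2 := Multiset.erase_le_erase b h
      rwa [Multiset.erase_cons_head, hS, Multiset.map_cons, hfx,
        Multiset.erase_cons_head] at h2
    obtain ⟨U, hUle, hUmap⟩ := ih (S.erase x) hT
    refine ⟨x ::ₘ U, ?_, by rw [Multiset.map_cons, hfx, hUmap]⟩
    rw [hS]
    exact Multiset.cons_le_cons x hUle

/-- Extraction of many pairs with equal residues. -/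
lemma egz_pairs {β γ : Type} [DecidableEq β] [Fintype γ] [DecidableEq γ] (r : β → γ) :
    ∀ (m : ℕ) (S : Multiset β), 2 * m + Fintype.card γ ≤ Multiset.card S + 1 →
      ∃ P : Multiset (β × β), Multiset.card P = m ∧
        (P.bind fun p => {p.1, p.2}) ≤ S ∧ ∀ p ∈ P, r p.1 = r p.2 := by
  intro m
  induction m with
  | zero => exact fun S _ => ⟨0, rfl, by simp, by simp⟩
  | succ m ih =>
    intro S h
    have hcard : Fintype.card γ < Multiset.card (S.map r) := by
      rw [Multiset.card_map]; omega
    obtain ⟨c, hc⟩ := egz_pigeon (S.map r) hcard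
    obtain ⟨U, hUle, hUmap⟩ := egz_exists_preimage r (Multiset.replicate 2 c) S hc
    have hU2 : Multiset.card U = 2 := by
      have := congrArg Multiset.card hUmap
      simpa using this
    obtain ⟨x, y, hxy⟩ := Multiset.card_eq_two.mp hU2
    have hrx : r x = c ∧ r y = c := by
      have h1 : r x ∈ Multiset.replicate 2 c := by
        rw [← hUmap, hxy]; simp
      have h2 : r y ∈ Multiset.replicate 2 c := by
        rw [← hUmap, hxy]; simp
      exact ⟨Multiset.eq_of_mem_replicate h1, Multiset.eq_of_mem_replicate h2⟩
    have hUS : ({x, y} : Multiset β) ≤ S := by rw [← hxy]; exact hUle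
    have hrest : 2 * m + Fintype.card γ ≤ Multiset.card (S - {x, y}) + 1 := by
      rw [Multiset.card_sub hUS]
      have : Multiset.card ({x, y} : Multiset β) = 2 := by
        simp [Multiset.insert_eq_cons]
      omega
    obtain ⟨P, hPcard, hPle, hPr⟩ := ih (S - {x, y}) hrest
    refine ⟨(x, y) ::ₘ P, by simp [hPcard], ?_, ?_⟩
    · rw [Multiset.cons_bind]
      have h5 : ({x, y} : Multiset β) + (P.bind fun p => {p.1, p.2}) ≤ S :=
        calc ({x, y} : Multiset β) + (P.bind fun p => {p.1, p.2})
            ≤ {x, y} + (S - {x, y}) := add_le_add (le_refl _) hPle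
          _ = (S - {x, y}) + {x, y} := add_comm _ _
          _ = S := tsub_add_cancel_of_le hUS
      simpa using h5
    · intro p hp
      rcases Multiset.mem_cons.mp hp with h | h
      · rw [h]; exact hrx.1.trans hrx.2.symm
      · exact hPr p h

/-- The upper-bound half of Harborth's theorem, by induction on `a`. -/
lemma egz_upper (n : ℕ) : ∀ (a : ℕ) (S : Multiset (Fin n → ZMod (2 ^ a))),
    (2 ^ a - 1) * 2 ^ n + 1 ≤ Multiset.card S →
      ∃ T ≤ S, Multiset.card T = 2 ^ a ∧ T.sum = 0 := by
  intro a
  induction a with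
  | zero =>
    intro S hS
    simp only [pow_zero] at *
    have : ∃ x, x ∈ S := by
      rcases Multiset.empty_or_exists_mem S with h | h
      · subst h; simp at hS
      · exact h
    obtain ⟨x, hx⟩ := this
    haveI : Subsingleton (ZMod (2 ^ 0)) := by rw [pow_zero]; infer_instance
    refine ⟨{x}, Multiset.singleton_le.mpr hx, by simp, ?_⟩
    simp only [Multiset.sum_singleton]
    funext i
    exact Subsingleton.elim _ _
  | succ a ih =>
    intro S hS
    classical
    set k : ℕ := 2 ^ a with hk
    have hk1 : 1 ≤ k := Nat.one_le_two_pow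
    have hK : 2 ^ (a + 1) = 2 * k := by rw [hk, pow_succ]; ring
    set N : ℕ := 2 ^ n with hN
    have hN1 : 1 ≤ N := Nat.one_le_two_pow
    set M : ℕ := (k - 1) * N with hM
    -- the residue map mod 2
    have h2dvd : (2 : ℕ) ∣ 2 ^ (a + 1) := dvd_pow_self 2 (Nat.succ_ne_zero a)
    have : NeZero (2 ^ (a + 1)) := ⟨(pow_pos (by norm_num : (0:ℕ) < 2) _).ne'⟩
    set r : (Fin n → ZMod (2 ^ (a + 1))) → (Fin n → ZMod 2) :=
      fun v i => ((v i).val : ZMod 2) with hr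
    have hcardγ : Fintype.card (Fin n → ZMod 2) = N := by
      simp [hN, Fintype.card_fun]
    -- extract M + 1 pairs
    have hlen : 2 * (M + 1) + Fintype.card (Fin n → ZMod 2) ≤ Multiset.card S + 1 := by
      rw [hcardγ]
      have hexp : (2 ^ (a + 1) - 1) * N = 2 * M + N := by
        have h1 : 2 ^ (a + 1) - 1 = 2 * (k - 1) + 1 := by omega
        rw [h1, hM]; ring
      omega
    obtain ⟨P, hPcard, hPle, hPr⟩ := egz_pairs r (M + 1) S hlen
    -- the halving map
    set g : (Fin n → ZMod (2 ^ (a + 1))) × (Fin n → ZMod (2 ^ (a + 1))) → (Fin n → ZMod (2 ^ a)) :=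
      fun p i => ((((p.1 i).val + (p.2 i).val) / 2 : ℕ) : ZMod (2 ^ a)) with hg
    have hPg : (k - 1) * 2 ^ n + 1 ≤ Multiset.card (P.map g) := by
      rw [Multiset.card_map, hPcard]
    obtain ⟨T', hT'le, hT'card, hT'sum⟩ := ih (P.map g) hPg
    obtain ⟨Q, hQle, hQmap⟩ := egz_exists_preimage g T' P hT'le
    have hQcard : Multiset.card Q = k := by
      have := congrArg Multiset.card hQmap
      rw [Multiset.card_map] at this
      rw [this, hT'card]
    set T : Multiset (Fin n → ZMod (2 ^ (a + 1))) := Q.bind fun p => {p.1, p.2} with hT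
    have hTle : T ≤ S := by
      refine le_trans ?_ hPle
      obtain ⟨R, hR⟩ := Multiset.le_iff_exists_add.mp hQle
      rw [hR, Multiset.add_bind]
      exact Multiset.le_add_right _ _
    have hTcard : Multiset.card T = 2 ^ (a + 1) := by
      rw [hT, Multiset.card_bind]
      conv_rhs => rw [hK]
      have h6 : Multiset.map (Multiset.card ∘ fun p => ({p.1, p.2} : Multiset _)) Q =
          Multiset.map (fun _ => 2) Q := by
        apply Multiset.map_congr rfl
        intro p _
        simp [Multiset.insert_eq_cons]
      rw [h6, Multiset.map_const', Multiset.sum_replicate, hQcard]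
      simp [mul_comm]
    refine ⟨T, hTle, hTcard, ?_⟩
    -- now the sum computation, coordinatewise
    funext i
    have heval : ∀ (W : Multiset (Fin n → ZMod (2 ^ (a + 1)))),
        W.sum i = (W.map fun v => v i).sum :=
      fun W => map_multiset_sum (Pi.evalAddMonoidHom (fun _ => ZMod (2 ^ (a + 1))) i) W
    have hevalk : ∀ (W : Multiset (Fin n → ZMod (2 ^ a))),
        W.sum i = (W.map fun v => v i).sum :=
      fun W => map_multiset_sum (Pi.evalAddMonoidHom (fun _ => ZMod (2 ^ a)) i) W
    show T.sum i = (0 : Fin n → ZMod (2 ^ (a+1))) i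
    rw [heval]
    -- natural-number halves
    set u : (Fin n → ZMod (2 ^ (a + 1))) × (Fin n → ZMod (2 ^ (a + 1))) → ℕ :=
      fun p => ((p.1 i).val + (p.2 i).val) / 2 with hu
    have hupair : ∀ p ∈ Q, (p.1 i).val + (p.2 i).val = 2 * u p := by
      intro p hp
      have hrp := hPr p (Multiset.mem_of_le hQle hp)
      have hrpi : (((p.1 i).val : ℕ) : ZMod 2) = (((p.2 i).val : ℕ) : ZMod 2) :=
        congrFun hrp i
      have hmod := (ZMod.natCast_eq_natCast_iff _ _ _).mp hrpi
      simp only [Nat.ModEq] at hmod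
      have hdvd : 2 ∣ (p.1 i).val + (p.2 i).val := by omega
      rw [hu]
      exact (Nat.mul_div_cancel' hdvd).symm
    have hsumT : (T.map fun v => v i).sum =
        (Q.map fun p => ((2 * u p : ℕ) : ZMod (2 ^ (a + 1)))).sum := by
      rw [hT, Multiset.map_bind, Multiset.sum_bind]
      congr 1
      apply Multiset.map_congr rfl
      intro p hp
      have h1 : Multiset.map (fun v => v i) ({p.1, p.2} : Multiset _) =
          ({p.1 i, p.2 i} : Multiset (ZMod (2 ^ (a + 1)))) := by
        simp [Multiset.insert_eq_cons]
      rw [h1]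
      have h2 : ({p.1 i, p.2 i} : Multiset (ZMod (2 ^ (a + 1)))).sum = p.1 i + p.2 i := by
        simp [Multiset.insert_eq_cons]
      rw [h2, ← hupair p hp, Nat.cast_add]
      simp [ZMod.natCast_val, ZMod.cast_id]
    -- divisibility from the inductive zero-sum
    have hdvdk : k ∣ (Q.map u).sum := by
      have h0 : T'.sum i = (0 : Fin n → ZMod (2 ^ a)) i := by rw [hT'sum]
      rw [hevalk] at h0
      rw [← hQmap, Multiset.map_map] at h0
      have h1 : (Q.map fun p => g p i) = (Q.map u).map (Nat.cast : ℕ → ZMod (2 ^ a)) := by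
        rw [Multiset.map_map]
        rfl
      simp only [Function.comp] at h0 h1
      rw [h1] at h0
      rw [← Nat.cast_multiset_sum] at h0
      exact (ZMod.natCast_eq_zero_iff _ _).mp h0
    rw [hsumT]
    have h3 : (Q.map fun p => ((2 * u p : ℕ) : ZMod (2 ^ (a + 1)))).sum
        = (((2 * (Q.map u).sum : ℕ)) : ZMod (2 ^ (a + 1))) := by
      rw [show (fun p => ((2 * u p : ℕ) : ZMod (2 ^ (a + 1)))) =
        ((Nat.cast : ℕ → ZMod (2 ^ (a + 1))) ∘ fun p => 2 * u p) from rfl,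
        ← Multiset.map_map, ← Nat.cast_multiset_sum]
      congr 1
      exact Multiset.sum_map_mul_left
    rw [h3]
    have h4 : (2 ^ (a + 1) : ℕ) ∣ 2 * (Q.map u).sum := by
      conv_lhs => rw [hK]
      exact Nat.mul_dvd_mul_left 2 hdvdk
    simp [(ZMod.natCast_eq_zero_iff _ _).mpr h4]

lemma egz_exponent (a n : ℕ) (hn : 1 ≤ n) :
    AddMonoid.exponent (Fin n → ZMod (2 ^ a)) = 2 ^ a := by
  rw [AddMonoid.exponent_pi]
  simp only [ZMod.exponent]
  refine Nat.dvd_antisymm (Finset.lcm_dvd fun i _ => dvd_rfl) ?_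
  exact Finset.dvd_lcm (Finset.mem_univ (⟨0, hn⟩ : Fin n))

/-- The lower-bound construction: a long sequence with no short zero-sum subsequence. -/
lemma egz_lower (a n : ℕ) (ha : 1 ≤ a) :
    ∃ S : Multiset (Fin n → ZMod (2 ^ a)), Multiset.card S = (2 ^ a - 1) * 2 ^ n ∧
      ¬ ∃ T ≤ S, Multiset.card T = 2 ^ a ∧ T.sum = 0 := by
  classical
  set k : ℕ := 2 ^ a with hk
  have hk2 : 2 ≤ k := by
    calc 2 = 2 ^ 1 := (pow_one 2).symm
    _ ≤ 2 ^ a := Nat.pow_le_pow_right (by norm_num) ha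
  haveI : Fact (1 < k) := ⟨hk2⟩
  have hone : (1 : ZMod k) ≠ 0 := one_ne_zero
  set ψ : (Fin n → Bool) → (Fin n → ZMod k) :=
    fun f i => if f i then 1 else 0 with hψ
  have hψinj : Function.Injective ψ := by
    intro f g hfg
    funext i
    have h := congrFun hfg i
    simp only [hψ] at h
    cases hf : f i <;> cases hg : g i <;> rw [hf, hg] at h <;>
      first
        | rfl
        | exact absurd (by simpa using h) hone
        | exact absurd (by simpa using h).symm hone
        | simp at h
  set S : Multiset (Fin n → ZMod k) :=
    (k - 1) • ((Finset.univ : Finset (Fin n → Bool)).val.map ψ) with hSdef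
  have hScard : Multiset.card S = (k - 1) * 2 ^ n := by
    rw [hSdef, Multiset.card_nsmul, Multiset.card_map]
    congr 1
    simp [Finset.card_univ]
  refine ⟨S, hScard, ?_⟩
  rintro ⟨T, hTS, hTcard, hTsum⟩
  have hk1ne : k - 1 ≠ 0 := by omega
  -- every element of T is a 0/1 vector
  have hmem : ∀ x ∈ T, ∃ f, x = ψ f := by
    intro x hx
    have hxS : x ∈ S := Multiset.mem_of_le hTS hx
    rw [hSdef, Multiset.mem_nsmul] at hxS
    obtain ⟨f, _, hf⟩ := Multiset.mem_map.mp hxS.2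
    exact ⟨f, hf.symm⟩
  have h01 : ∀ x ∈ T, ∀ i, x i = 0 ∨ x i = 1 := by
    intro x hx i
    obtain ⟨f, rfl⟩ := hmem x hx
    by_cases h : f i <;> simp [hψ, h]
  -- in each coordinate the number of ones is 0 or k
  have hcoord : ∀ i : Fin n, ∀ x ∈ T, ∀ y ∈ T, x i = y i := by
    intro i
    obtain ⟨c, hc⟩ : ∃ c : ℕ, c = Multiset.card (T.filter fun x => x i = 1) := ⟨_, rfl⟩
    have hcle : c ≤ k :=
      calc c = Multiset.card (T.filter fun x => x i = 1) := hc
        _ ≤ Multiset.card T := Multiset.card_le_card (Multiset.filter_le _ _)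
        _ = k := hTcard
    have hsum_i : T.sum i = (c : ZMod k) := by
      have heval : T.sum i = (T.map fun v => v i).sum :=
        map_multiset_sum (Pi.evalAddMonoidHom (fun _ => ZMod k) i) T
      rw [heval]
      rw [← Multiset.filter_add_not (fun x => x i = 1) T, Multiset.map_add,
        Multiset.sum_add]
      have h1 : ((T.filter fun x => x i = 1).map fun v => v i).sum = (c : ZMod k) := by
        have : ((T.filter fun x => x i = 1).map fun v => v i) =
            Multiset.replicate c 1 := by
          rw [Multiset.eq_replicate]
          constructor
          · rw [Multiset.card_map, ← hc]
          · intro b hb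
            obtain ⟨x, hx, rfl⟩ := Multiset.mem_map.mp hb
            exact (Multiset.mem_filter.mp hx).2
        rw [this, Multiset.sum_replicate]
        simp
      have h2 : ((T.filter fun x => ¬(x i = 1)).map fun v => v i).sum = 0 := by
        have : ((T.filter fun x => ¬(x i = 1)).map fun v => v i) =
            Multiset.replicate (Multiset.card (T.filter fun x => ¬(x i = 1))) 0 := by
          rw [Multiset.eq_replicate]
          constructor
          · rw [Multiset.card_map]
          · intro b hb
            obtain ⟨x, hx, rfl⟩ := Multiset.mem_map.mp hb
            have hx1 := (Multiset.mem_filter.mp hx).2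
            have hxT := (Multiset.mem_filter.mp hx).1
            rcases h01 x hxT i with h | h
            · exact h
            · exact absurd h hx1
        rw [this, Multiset.sum_replicate]
        simp
      rw [h1, h2, add_zero]
    have hczero : (c : ZMod k) = 0 := by
      rw [← hsum_i, hTsum]
      rfl
    have hdvd : k ∣ c := (ZMod.natCast_eq_zero_iff _ _).mp hczero
    have hc0k : c = 0 ∨ c = k := by
      rcases Nat.eq_zero_or_pos c with h | h
      · exact Or.inl h
      · exact Or.inr (Nat.le_antisymm hcle (Nat.le_of_dvd h hdvd))
    rcases hc0k with h | h
    · -- no element has a 1 in coordinate i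
      have hall0 : ∀ x ∈ T, x i = 0 := by
        intro x hx
        rcases h01 x hx i with h0 | h1
        · exact h0
        · exfalso
          have hmemf : x ∈ T.filter fun x => x i = 1 := Multiset.mem_filter.mpr ⟨hx, h1⟩
          have hpos : 0 < c := by
            rw [hc]
            exact Multiset.card_pos_iff_exists_mem.mpr ⟨x, hmemf⟩
          exact hpos.ne' h
      intro x hx y hy
      rw [hall0 x hx, hall0 y hy]
    · -- every element has a 1 in coordinate i
      have hfe : T.filter (fun x => x i = 1) = T := by
        apply Multiset.eq_of_le_of_card_le (Multiset.filter_le _ _)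
        rw [hTcard, ← hc, h]
      have hall1 : ∀ x ∈ T, x i = 1 := by
        intro x hx
        have : x ∈ T.filter fun x => x i = 1 := by rw [hfe]; exact hx
        exact (Multiset.mem_filter.mp this).2
      intro x hx y hy
      rw [hall1 x hx, hall1 y hy]
  -- hence all elements of T are equal
  have hT0 : ∃ x, x ∈ T := by
    apply Multiset.card_pos_iff_exists_mem.mp
    omega
  obtain ⟨x₀, hx₀⟩ := hT0
  have hrep : T = Multiset.replicate k x₀ := by
    have h := Multiset.eq_replicate_card.mpr
      (fun y hy => funext fun i => hcoord i y hy x₀ hx₀ : ∀ y ∈ T, y = x₀)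
    rwa [hTcard] at h
  have hcountT : Multiset.count x₀ T = k := by
    rw [hrep, Multiset.count_replicate_self]
  have hcountS : Multiset.count x₀ S ≤ k - 1 := by
    rw [hSdef, Multiset.count_nsmul]
    have hnodup : (((Finset.univ : Finset (Fin n → Bool)).val.map ψ)).Nodup :=
      Multiset.Nodup.map hψinj (Finset.univ.nodup)
    have := (Multiset.nodup_iff_count_le_one.mp hnodup) x₀
    calc (k - 1) * Multiset.count x₀ (((Finset.univ : Finset (Fin n → Bool)).val.map ψ))
        ≤ (k - 1) * 1 := Nat.mul_le_mul_left _ this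
      _ = k - 1 := by ring
  have := Multiset.count_le_of_le x₀ hTS
  omega

theorem harborth_two_power (a n : ℕ) (ha : 1 ≤ a) (hn : 1 ≤ n) :
    EGZ (Fin n → ZMod (2 ^ a)) = (2 ^ a - 1) * 2 ^ n + 1 := by
  have hexp := egz_exponent a n hn
  have hLmem : ((2 ^ a - 1) * 2 ^ n + 1) ∈ {ℓ : ℕ | ∀ S : Multiset (Fin n → ZMod (2 ^ a)),
      ℓ ≤ Multiset.card S → ∃ T ≤ S, Multiset.card T = AddMonoid.exponent (Fin n → ZMod (2 ^ a))
        ∧ T.sum = 0} := by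
    intro S hS
    rw [hexp]
    exact egz_upper n a S hS
  apply le_antisymm
  · exact Nat.sInf_le hLmem
  · apply le_csInf ⟨_, hLmem⟩
    intro b hb
    by_contra hlt
    push_neg at hlt
    obtain ⟨S, hScard, hno⟩ := egz_lower a n ha
    apply hno
    have hbS : b ≤ Multiset.card S := by omega
    obtain ⟨T, hTS, hTcard, hTsum⟩ := hb S hbS
    rw [hexp] at hTcard
    exact ⟨T, hTS, hTcard, hTsum⟩
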